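/- arXiv:1708.06691 — 2 statements merged into one kernel-verified Lean document; each statement's English description precedes it below -/
import Mathlib

section
/- Let P and Q be two vertex-disjoint paths in an in-semicomplete digraph D such that the last vertex of P is adjacent to the last vertex of Q. Then there exists a path R in D with V(R) = V(P) ∪ V(Q) whose last vertex is the last vertex of P or of Q. -/
open scoped Classical

namespace DigraphPaper

variable {V : Type*} [Fintype V] [DecidableEq V]

/-- Vertices `u` and `v` are adjacent in the digraph with arc relation `A`. -/
def DAdj (A : V → V → Prop) (u v : V) : Prop := A u v ∨ A v u

/-- A set of vertices is stable if its vertices are pairwise nonadjacent. -/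
def DStable (A : V → V → Prop) (S : Set V) : Prop :=
  ∀ u ∈ S, ∀ v ∈ S, u ≠ v → ¬ DAdj A u v

/-- The in-neighborhood of every vertex induces a semicomplete digraph. -/
def InSemicomplete (A : V → V → Prop) : Prop :=
  ∀ v u w : V, A u v → A w v → u ≠ w → DAdj A u w

/-- The out-neighborhood of every vertex induces a semicomplete digraph. -/
def OutSemicomplete (A : V → V → Prop) : Prop :=
  ∀ v u w : V, A v u → A v w → u ≠ w → DAdj A u w

/-- A path: a nonempty list of distinct vertices with consecutive arcs. -/
def IsPath (A : V → V → Prop) (p : List V) : Prop :=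
  p ≠ [] ∧ p.Nodup ∧ p.Chain' A

/-- A collection of pairwise vertex-disjoint lists. -/
def PDisjoint (P : Finset (List V)) : Prop :=
  ∀ p ∈ P, ∀ q ∈ P, p ≠ q → ∀ x : V, x ∈ p → x ∉ q

/-- A path partition: vertex-disjoint paths covering all vertices. -/
def IsPathPartition (A : V → V → Prop) (P : Finset (List V)) : Prop :=
  (∀ p ∈ P, IsPath A p) ∧ PDisjoint P ∧ ∀ v : V, ∃ p ∈ P, v ∈ p

/-- The k-norm of a collection of paths. -/
def knorm (k : ℕ) (P : Finset (List V)) : ℕ := ∑ p ∈ P, min p.length k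

/-- The set of final vertices of the paths in `P`. -/
def pends (P : Finset (List V)) : Set V := {x | ∃ p ∈ P, p.getLast? = some x}

/-- A partial k-coloring: k pairwise disjoint stable sets. -/
def IsPartialKColoring (A : V → V → Prop) (k : ℕ) (C : Fin k → Finset V) : Prop :=
  (∀ i, DStable A (C i : Set V)) ∧ ∀ i j, i ≠ j → Disjoint (C i) (C j)

/-- Orthogonality of a partial k-coloring to a path partition:
each path meets `min |P| k` distinct color classes. -/
def OrthoPC (k : ℕ) (C : Fin k → Finset V) (P : Finset (List V)) : Prop :=
  ∀ p ∈ P, min p.length k ≤ (Finset.univ.filter fun i : Fin k => ∃ x ∈ p, x ∈ C i).card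

/-- A k-optimal path partition. -/
def KOptimal (A : V → V → Prop) (k : ℕ) (P : Finset (List V)) : Prop :=
  IsPathPartition A P ∧
    ∀ Q : Finset (List V), IsPathPartition A Q → knorm k P ≤ knorm k Q

/-- A k-pack: at most k vertex-disjoint paths. -/
def IsKPack (A : V → V → Prop) (k : ℕ) (P : Finset (List V)) : Prop :=
  P.card ≤ k ∧ (∀ p ∈ P, IsPath A p) ∧ PDisjoint P

/-- Weight of a k-pack: number of covered vertices. -/
def weight (P : Finset (List V)) : ℕ := ∑ p ∈ P, p.length

/-- The set of vertices covered by the paths of `P`. -/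
def cover (P : Finset (List V)) : Finset V := P.biUnion List.toFinset

/-- An optimal k-pack. -/
def OptimalKPack (A : V → V → Prop) (k : ℕ) (P : Finset (List V)) : Prop :=
  IsKPack A k P ∧ ∀ Q : Finset (List V), IsKPack A k Q → weight Q ≤ weight P

/-- A coloring: a partition of the vertex set into stable sets. -/
def IsColoring (A : V → V → Prop) (C : Finset (Finset V)) : Prop :=
  (∀ c ∈ C, DStable A (c : Set V)) ∧ (∀ c ∈ C, c.Nonempty) ∧
  (∀ c ∈ C, ∀ c' ∈ C, c ≠ c' → Disjoint c c') ∧ ∀ v : V, ∃ c ∈ C, v ∈ c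

/-- Orthogonality of a coloring to a k-pack:
each color class meets `min |C| k` distinct paths. -/
def OrthoCP (k : ℕ) (C : Finset (Finset V)) (P : Finset (List V)) : Prop :=
  ∀ c ∈ C, min c.card k ≤ (P.filter fun p => ∃ x ∈ c, x ∈ p).card

/-- π_k(D): minimum k-norm of a path partition. -/
noncomputable def pik (A : V → V → Prop) (k : ℕ) : ℕ :=
  sInf {n | ∃ P : Finset (List V), IsPathPartition A P ∧ knorm k P = n}

/-- α_k(D): maximum weight of a partial k-coloring. -/
noncomputable def alphak (A : V → V → Prop) (k : ℕ) : ℕ :=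
  sSup {n | ∃ C : Fin k → Finset V, IsPartialKColoring A k C ∧ ∑ i, (C i).card = n}

/-- π(D): minimum number of paths in a path partition. -/
noncomputable def piNum (A : V → V → Prop) : ℕ :=
  sInf {n | ∃ P : Finset (List V), IsPathPartition A P ∧ P.card = n}

/-- α(D): maximum size of a stable set. -/
noncomputable def alphaNum (A : V → V → Prop) : ℕ :=
  sSup {n | ∃ S : Finset V, DStable A (S : Set V) ∧ S.card = n}

/-- k-norm of a coloring. -/
def cnorm (k : ℕ) (C : Finset (Finset V)) : ℕ := ∑ c ∈ C, min c.card k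

/-- χ_k(D): minimum k-norm of a coloring. -/
noncomputable def chik (A : V → V → Prop) (k : ℕ) : ℕ :=
  sInf {n | ∃ C : Finset (Finset V), IsColoring A C ∧ cnorm k C = n}

/-- λ_k(D): maximum weight of a k-pack. -/
noncomputable def lamk (A : V → V → Prop) (k : ℕ) : ℕ :=
  sSup {n | ∃ P : Finset (List V), IsKPack A k P ∧ weight P = n}

lemma append_one (A : V → V → Prop) (r' : List V) (z u : V) (hr' : IsPath A r')
    (hz : r'.getLast? = some z) (harc : A z u) (hu : u ∉ r') :
    IsPath A (r' ++ [u]) ∧ (r' ++ [u]).toFinset = r'.toFinset ∪ {u} ∧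
      (r' ++ [u]).getLast? = some u := by
  obtain ⟨hne, hnd, hch⟩ := hr'
  refine ⟨⟨by simp, ?_, ?_⟩, by simp, by simp⟩
  · simp [List.nodup_append, hnd, hu]
    intro a ha h; exact hu (h ▸ ha)
  · rw [List.Chain', List.isChain_append]
    refine ⟨hch, by simp, ?_⟩
    intro x hx y hy
    simp at hy
    rw [hz] at hx; simp at hx; subst hx; subst hy; exact harc

lemma merge_aux (A : V → V → Prop) (hin : InSemicomplete A) :
    ∀ n (p q : List V) (u w : V), p.length + q.length ≤ n →
    IsPath A p → IsPath A q → (∀ x : V, x ∈ p → x ∉ q) →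
    p.getLast? = some u → q.getLast? = some w → A w u →
    ∃ r : List V, IsPath A r ∧ r.toFinset = p.toFinset ∪ q.toFinset ∧
      r.getLast? = some u := by
  intro n
  induction n with
  | zero =>
    intro p q u w hle hp _ _ hu _ _
    exfalso
    have : p.length = 0 := by omega
    rw [List.length_eq_zero_iff] at this
    simp [this] at hu
  | succ n ih =>
    intro p q u w hle hp hq hdisj hu hw harc
    obtain hnil | ⟨p', a, hpe⟩ := p.eq_nil_or_concat
    · exact absurd hnil hp.1
    rw [List.concat_eq_append] at hpe
    have ha : a = u := by subst hpe; simpa using hu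
    rw [ha] at hpe
    subst hpe
    have hupq : u ∉ p' ∧ u ∉ q := by
      constructor
      · have := hp.2.1
        simp [List.nodup_append] at this
        exact fun h => this.2 u h rfl
      · exact hdisj u (by simp)
    obtain rfl | hp'ne := eq_or_ne p' []
    · -- p = [u]; take q ++ [u]
      have hql : q.getLast? = some w := hw
      obtain ⟨hr, hfin, hlast⟩ := append_one A q w u hq hql harc hupq.2
      refine ⟨q ++ [u], hr, ?_, hlast⟩
      rw [hfin]; simp [Finset.union_comm]
    · -- p' nonempty: get its last vertex u'
      obtain ⟨u', hu'⟩ : ∃ u', p'.getLast? = some u' := by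
        cases h : p'.getLast? with
        | none => exact absurd (List.getLast?_eq_none_iff.mp h) hp'ne
        | some x => exact ⟨x, rfl⟩
      have hp'path : IsPath A p' := by
        obtain ⟨_, hnd, hch⟩ := hp
        rw [List.Chain', List.isChain_append] at hch
        simp [List.nodup_append] at hnd
        exact ⟨hp'ne, hnd.1, hch.1⟩
      have harcu' : A u' u := by
        have hch := hp.2.2
        rw [List.Chain', List.isChain_append] at hch
        exact hch.2.2 u' (by rw [hu']; rfl) u rfl
      have hu'w : u' ≠ w := by
        intro h; subst h
        have hu'p : u' ∈ p' := List.mem_of_mem_getLast? hu'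
        have : u' ∈ q := List.mem_of_mem_getLast? hw
        exact hdisj u' (by simp [hu'p]) this
      have hdisj' : ∀ x : V, x ∈ p' → x ∉ q := fun x hx => hdisj x (by simp [hx])
      have hlen : p'.length + q.length ≤ n := by
        have := hle; simp at this; omega
      have hlen2 : q.length + p'.length ≤ n := by omega
      rcases hin u u' w harcu' harc hu'w with h1 | h2
      · -- A u' w : recurse with q and p' swapped, path ends at w, then w → u
        obtain ⟨r', hr', hfin', hlast'⟩ := ih q p' w u' hlen2 hq hp'path
          (fun x hx hx' => hdisj' x hx' hx) hw hu' h1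
        have hur' : u ∉ r' := by
          intro h
          rw [← List.mem_toFinset, hfin'] at h
          simp at h
          rcases h with h | h
          · exact hupq.2 h
          · exact hupq.1 h
        obtain ⟨hr, hfin, hlast⟩ := append_one A r' w u hr' hlast' harc hur'
        refine ⟨r' ++ [u], hr, ?_, hlast⟩
        rw [hfin, hfin']
        simp only [List.toFinset_append, List.toFinset_cons, List.toFinset_nil]
        ext x; simp; tauto
      · -- A w u' : recurse with p' and q, path ends at u', then u' → u
        obtain ⟨r', hr', hfin', hlast'⟩ := ih p' q u' w hlen hp'path hq hdisj' hu' hw h2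
        have hur' : u ∉ r' := by
          intro h
          rw [← List.mem_toFinset, hfin'] at h
          simp at h
          rcases h with h | h
          · exact hupq.1 h
          · exact hupq.2 h
        obtain ⟨hr, hfin, hlast⟩ := append_one A r' u' u hr' hlast' harcu' hur'
        refine ⟨r' ++ [u], hr, ?_, hlast⟩
        rw [hfin, hfin']
        simp only [List.toFinset_append, List.toFinset_cons, List.toFinset_nil]
        ext x; simp

/-- Two vertex-disjoint paths with adjacent last vertices in an in-semicomplete
digraph can be merged into a path ending at one of the two last vertices. -/
theorem stmt1 (A : V → V → Prop) (hirr : Irreflexive A) (hin : InSemicomplete A)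
    (p q : List V) (u w : V) (hp : IsPath A p) (hq : IsPath A q)
    (hdisj : ∀ x : V, x ∈ p → x ∉ q)
    (hu : p.getLast? = some u) (hw : q.getLast? = some w)
    (hadj : DAdj A u w) :
    ∃ r : List V, IsPath A r ∧ r.toFinset = p.toFinset ∪ q.toFinset ∧
      (r.getLast? = some u ∨ r.getLast? = some w) := by
  rcases hadj with h | h
  · obtain ⟨r, hr, hfin, hlast⟩ := merge_aux A hin (q.length + p.length) q p w u le_rfl
      hq hp (fun x hx hx' => hdisj x hx' hx) hw hu h
    exact ⟨r, hr, by rw [hfin, Finset.union_comm], Or.inr hlast⟩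
  · obtain ⟨r, hr, hfin, hlast⟩ := merge_aux A hin (p.length + q.length) p q u w le_rfl
      hp hq hdisj hu hw h
    exact ⟨r, hr, hfin, Or.inl hlast⟩

end DigraphPaper
end

section
/- If P is a k-optimal path partition of an in-semicomplete digraph D, then there exists a partial k-coloring of D orthogonal to P (i.e., Berge's Conjecture holds for in-semicomplete digraphs). -/
open scoped Classical
set_option linter.unusedSectionVars false
set_option maxHeartbeats 1000000

namespace DigraphPaper

variable {V : Type*} [Fintype V] [DecidableEq V]

/-- the `d`-th vertex from the end of `q` -/
def nthEnd (q : List V) (d : ℕ) : Option V := (q.take (q.length - d)).getLast?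

lemma nthEnd_some_lt {q : List V} {d : ℕ} {v : V} (h : nthEnd q d = some v) : d < q.length := by
  by_contra hc
  push_neg at hc
  simp [nthEnd, Nat.sub_eq_zero_of_le hc] at h

lemma nthEnd_mem {q : List V} {d : ℕ} {v : V} (h : nthEnd q d = some v) : v ∈ q := by
  have := List.mem_getLast?_eq_getLast (l := q.take (q.length - d)) (x := v) h
  obtain ⟨h1, h2⟩ := this
  exact List.mem_of_mem_take (h2 ▸ List.getLast_mem h1)

lemma nthEnd_isSome {q : List V} {d : ℕ} (h : d < q.length) : ∃ v, nthEnd q d = some v := by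
  have hne : q.take (q.length - d) ≠ [] := by
    have : 0 < q.length - d := by omega
    intro hc
    have := congrArg List.length hc
    simp [List.length_take] at this
    omega
  exact ⟨_, List.getLast?_eq_getLast_of_ne_nil hne⟩

lemma nthEnd_eq_getElem? {q : List V} {d : ℕ} (h : d < q.length) :
    nthEnd q d = q[q.length - d - 1]? := by
  unfold nthEnd
  rw [List.getLast?_eq_getElem?]
  have hlen : (q.take (q.length - d)).length = q.length - d := by
    simp [List.length_take]
  rw [hlen, List.getElem?_take_of_lt (by omega)]

lemma nthEnd_inj {q : List V} (hq : q.Nodup) {d e : ℕ} {v : V}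
    (hd : nthEnd q d = some v) (he : nthEnd q e = some v) : d = e := by
  have h1 := nthEnd_some_lt hd
  have h2 := nthEnd_some_lt he
  rw [nthEnd_eq_getElem? h1] at hd
  rw [nthEnd_eq_getElem? h2] at he
  rw [List.getElem?_eq_some_iff] at hd he
  obtain ⟨ha, ha'⟩ := hd
  obtain ⟨hb, hb'⟩ := he
  have := (List.Nodup.getElem_inj_iff hq).1 (ha'.trans hb'.symm)
  omega

lemma nthEnd_append_right {l₁ l₂ : List V} {d : ℕ} (h : d < l₂.length) :
    nthEnd (l₁ ++ l₂) d = nthEnd l₂ d := by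
  unfold nthEnd
  have h1 : (l₁ ++ l₂).length - d = l₁.length + (l₂.length - d) := by
    simp [List.length_append]; omega
  rw [h1, List.take_append]
  have h2 : l₁.length + (l₂.length - d) - l₁.length = l₂.length - d := by omega
  rw [List.take_of_length_le (by omega), h2]
  apply List.getLast?_append_of_ne_nil
  intro hc
  have := congrArg List.length hc
  simp [List.length_take] at this
  omega

lemma nthEnd_append_left {l₁ l₂ : List V} {d : ℕ} (h : l₂.length ≤ d) :
    nthEnd (l₁ ++ l₂) d = nthEnd l₁ (d - l₂.length) := by
  unfold nthEnd
  have h1 : (l₁ ++ l₂).length - d = l₁.length - (d - l₂.length) := by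
    simp [List.length_append]; omega
  rw [h1, List.take_append_of_le_length (by omega)]

lemma nthEnd_drop {q : List V} {m d : ℕ} (h : d + m < q.length) :
    nthEnd (q.drop m) d = nthEnd q d := by
  conv_rhs => rw [← List.take_append_drop m q]
  rw [nthEnd_append_right (by simp [List.length_drop]; omega)]

lemma nthEnd_zero {q : List V} : nthEnd q 0 = q.getLast? := by
  simp [nthEnd]

lemma exists_nthEnd {q : List V} {v : V} (h : v ∈ q) : ∃ d, nthEnd q d = some v := by
  rw [List.mem_iff_getElem] at h
  obtain ⟨i, hi, rfl⟩ := h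
  refine ⟨q.length - i - 1, ?_⟩
  rw [nthEnd_eq_getElem? (by omega)]
  rw [List.getElem?_eq_some_iff]
  exact ⟨by omega, by congr 1; omega⟩



lemma eq_dropLast_append {l : List V} {w : V} (h : l.getLast? = some w) :
    l = l.dropLast ++ [w] := by
  have hne : l ≠ [] := by rintro rfl; simp at h
  have h2 := List.getLast?_eq_getLast_of_ne_nil hne
  rw [h] at h2
  conv_lhs => rw [← List.dropLast_append_getLast hne]
  rw [Option.some_inj.1 h2]

lemma merge_core (A : V → V → Prop) (n : ℕ)
    (ih : ∀ (X Y : List V) (w : V), X.length + Y.length ≤ n →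
      IsPath A X → IsPath A Y → X.getLast? = some w → Y.getLast? = some w →
      (∀ x, x ∈ X → x ∈ Y → x = w) →
      ∃ Z, IsPath A Z ∧ Z.getLast? = some w ∧ Z.toFinset = X.toFinset ∪ Y.toFinset)
    (X₀ Y₀ : List V) (w : V) (hlen : (X₀ ++ [w]).length + (Y₀ ++ [w]).length ≤ n + 1)
    (hX : IsPath A (X₀ ++ [w])) (hY : IsPath A (Y₀ ++ [w]))
    (hint : ∀ x, x ∈ X₀ ++ [w] → x ∈ Y₀ ++ [w] → x = w)
    (hX₀ : X₀ ≠ []) (hY₀ : Y₀ ≠ [])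
    (hadj : A (X₀.getLast hX₀) (Y₀.getLast hY₀)) :
    ∃ Z, IsPath A Z ∧ Z.getLast? = some w ∧
      Z.toFinset = (X₀ ++ [w]).toFinset ∪ (Y₀ ++ [w]).toFinset := by
  set u1 := X₀.getLast hX₀ with hu1
  set u2 := Y₀.getLast hY₀ with hu2
  obtain ⟨hXne, hXnd, hXch⟩ := hX
  obtain ⟨hYne, hYnd, hYch⟩ := hY
  have hwX₀ : w ∉ X₀ := by
    intro hc
    exact (List.nodup_append.1 hXnd).2.2 w hc w (by simp) rfl
  have hwY₀ : w ∉ Y₀ := by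
    intro hc
    exact (List.nodup_append.1 hYnd).2.2 w hc w (by simp) rfl
  have hu1X₀ : u1 ∈ X₀ := List.getLast_mem _
  have hu2Y₀ : u2 ∈ Y₀ := List.getLast_mem _
  have hu2w : u2 ≠ w := fun hc => hwY₀ (hc ▸ hu2Y₀)
  have hu2X₀ : u2 ∉ X₀ := by
    intro hc
    exact hu2w (hint u2 (by simp [hc]) (by simp [hu2Y₀]))
  have hgX₀ : X₀.getLast? = some u1 := List.getLast?_eq_getLast_of_ne_nil hX₀
  have hgY₀ : Y₀.getLast? = some u2 := List.getLast?_eq_getLast_of_ne_nil hY₀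
  have hchX₀ : X₀.Chain' A := hXch.prefix ⟨[w], rfl⟩
  have hchY₀ : Y₀.Chain' A := hYch.prefix ⟨[w], rfl⟩
  have hA2w : A u2 w := by
    have := (List.isChain_append.1 hYch).2.2
    exact this u2 hgY₀ w rfl
  -- the new left path X' = X₀ ++ [u2]
  have hX' : IsPath A (X₀ ++ [u2]) := by
    refine ⟨by simp, ?_, ?_⟩
    · exact List.nodup_append.2 ⟨(List.nodup_append.1 hXnd).1, by simp,
        by intro x hx; simp; intro hc; exact hu2X₀ (hc ▸ hx)⟩
    · exact List.isChain_append.2 ⟨hchX₀, by simp, by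
        intro x hx y hy
        simp at hy
        rw [hgX₀] at hx
        simp at hx
        rw [← hx, ← hy]
        exact hadj⟩
  have hY' : IsPath A Y₀ := ⟨hY₀, (List.nodup_append.1 hYnd).1, hchY₀⟩
  have hint' : ∀ x, x ∈ X₀ ++ [u2] → x ∈ Y₀ → x = u2 := by
    intro x hx hxY
    rcases List.mem_append.1 hx with h | h
    · exact absurd (hint x (by simp [h]) (by simp [hxY])) (fun hc => hwY₀ (hc ▸ hxY))
    · simpa using h
  obtain ⟨Z', hZ'p, hZ'last, hZ'fin⟩ := ih (X₀ ++ [u2]) Y₀ u2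
    (by simp at hlen ⊢; omega) hX' hY' (by simp) hgY₀ hint'
  have hwZ' : w ∉ Z' := by
    intro hc
    have : w ∈ Z'.toFinset := List.mem_toFinset.2 hc
    rw [hZ'fin] at this
    simp at this
    rcases this with h | h | h
    · exact hu2w h.symm
    · exact hwX₀ h
    · exact hwY₀ h
    
  refine ⟨Z' ++ [w], ⟨by simp, ?_, ?_⟩, by simp, ?_⟩
  · exact List.nodup_append.2 ⟨hZ'p.2.1, by simp, by
      intro x hx; simp; intro hc; exact hwZ' (hc ▸ hx)⟩
  · refine List.isChain_append.2 ⟨hZ'p.2.2, by simp, ?_⟩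
    intro x hx y hy
    simp at hy
    rw [hZ'last] at hx
    simp at hx
    rw [← hx, ← hy]
    exact hA2w
  · rw [List.toFinset_append, hZ'fin]
    ext z
    have h2 : z = u2 → z ∈ Y₀ := fun h => h ▸ hu2Y₀
    simp
    tauto

lemma merge_paths (A : V → V → Prop) (hin : InSemicomplete A) :
    ∀ (n : ℕ) (X Y : List V) (w : V), X.length + Y.length ≤ n →
      IsPath A X → IsPath A Y → X.getLast? = some w → Y.getLast? = some w →
      (∀ x, x ∈ X → x ∈ Y → x = w) →
      ∃ Z, IsPath A Z ∧ Z.getLast? = some w ∧ Z.toFinset = X.toFinset ∪ Y.toFinset := by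
  intro n
  induction n with
  | zero =>
    intro X Y w hlen hX hY _ _ _
    exfalso
    have : X ≠ [] := hX.1
    have : 0 < X.length := List.length_pos_iff.2 this
    omega
  | succ n ih =>
    intro X Y w hlen hX hY hXl hYl hint
    obtain ⟨X₀, rfl⟩ : ∃ X₀, X = X₀ ++ [w] := ⟨X.dropLast, eq_dropLast_append hXl⟩
    obtain ⟨Y₀, rfl⟩ : ∃ Y₀, Y = Y₀ ++ [w] := ⟨Y.dropLast, eq_dropLast_append hYl⟩
    by_cases hX0 : X₀ = []
    · subst hX0
      refine ⟨Y₀ ++ [w], hY, hYl, ?_⟩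
      simp
    by_cases hY0 : Y₀ = []
    · subst hY0
      refine ⟨X₀ ++ [w], hX, hXl, ?_⟩
      simp
    have hgX₀ : X₀.getLast? = some (X₀.getLast hX0) := List.getLast?_eq_getLast_of_ne_nil hX0
    have hgY₀ : Y₀.getLast? = some (Y₀.getLast hY0) := List.getLast?_eq_getLast_of_ne_nil hY0
    have hA1 : A (X₀.getLast hX0) w := by
      have := (List.isChain_append.1 hX.2.2).2.2
      exact this _ hgX₀ w rfl
    have hA2 : A (Y₀.getLast hY0) w := by
      have := (List.isChain_append.1 hY.2.2).2.2
      exact this _ hgY₀ w rfl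
    have hne : X₀.getLast hX0 ≠ Y₀.getLast hY0 := by
      intro hc
      have h1 : X₀.getLast hX0 ∈ X₀ := List.getLast_mem _
      have h2 : X₀.getLast hX0 ∈ Y₀ := hc ▸ List.getLast_mem _
      have := hint (X₀.getLast hX0) (by simp [h1]) (by simp [h2])
      rw [this] at h1
      exact (List.nodup_append.1 hX.2.1).2.2 w h1 w (by simp) rfl
    rcases hin w _ _ hA1 hA2 hne with h | h
    · exact merge_core A n ih X₀ Y₀ w hlen hX hY hint hX0 hY0 h
    · obtain ⟨Z, h1, h2, h3⟩ := merge_core A n ih Y₀ X₀ w (by simp at hlen ⊢; omega)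
        hY hX (fun x hx hy => hint x hy hx) hY0 hX0 h
      exact ⟨Z, h1, h2, by rw [h3, Finset.union_comm]⟩


def HasDepth (P : Finset (List V)) (v : V) (d : ℕ) : Prop := ∃ q ∈ P, nthEnd q d = some v

def StableEnds (A : V → V → Prop) (P : Finset (List V)) (i : ℕ) : Prop :=
  ∀ p ∈ P, ∀ q ∈ P, p ≠ q → ∀ u w, nthEnd p i = some u → nthEnd q i = some w → ¬ DAdj A u w

/-- The orthogonality-transfer relation between an original partition `P` and final `Q`. -/
def GR (k j : ℕ) (P Q : Finset (List V)) : Prop :=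
  (∀ r ∈ Q, k < r.length → r ∈ P) ∧
  (∀ p ∈ P, k < p.length → p ∈ Q) ∧
  (∀ p ∈ P, p.length ≤ k → ∀ v ∈ p, ∃ r ∈ Q, v ∈ r ∧ r.length ≤ k) ∧
  (∀ p ∈ P, p.length ≤ k → ∀ v ∈ p, ∀ v' ∈ p, v ≠ v' → ∀ d,
      HasDepth Q v d → HasDepth Q v' d → False) ∧
  (∀ v d, d < j → HasDepth P v d → HasDepth Q v d) ∧
  (∀ v d d', j ≤ d → HasDepth P v d → HasDepth Q v d' → j ≤ d')

lemma mem_path_unique {A : V → V → Prop} {P : Finset (List V)} (hP : IsPathPartition A P)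
    {p q : List V} (hp : p ∈ P) (hq : q ∈ P) {v : V} (hvp : v ∈ p) (hvq : v ∈ q) : p = q := by
  by_contra hne
  exact hP.2.1 p hp q hq hne v hvp hvq

lemma HasDepth_unique {A : V → V → Prop} {P : Finset (List V)} (hP : IsPathPartition A P)
    {v : V} {d e : ℕ} (hd : HasDepth P v d) (he : HasDepth P v e) : d = e := by
  obtain ⟨r, hr, hrd⟩ := hd
  obtain ⟨s, hs, hse⟩ := he
  have : r = s := mem_path_unique hP hr hs (nthEnd_mem hrd) (nthEnd_mem hse)
  subst this
  exact nthEnd_inj (hP.1 r hr).2.1 hrd hse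

lemma sum_sq_le {A : V → V → Prop} {P : Finset (List V)} (hP : IsPathPartition A P) :
    ∑ r ∈ P, r.length ^ 2 ≤ (Fintype.card V) ^ 2 := by
  have hdisj : ∀ r1 ∈ P, ∀ r2 ∈ P, r1 ≠ r2 → Disjoint r1.toFinset r2.toFinset := by
    intro r1 h1 r2 h2 hne
    rw [Finset.disjoint_left]
    intro x hx1 hx2
    exact hP.2.1 r1 h1 r2 h2 hne x (List.mem_toFinset.1 hx1) (List.mem_toFinset.1 hx2)
  have hlen : ∑ r ∈ P, r.length ≤ Fintype.card V := by
    have h1 : ∑ r ∈ P, r.length = ∑ r ∈ P, r.toFinset.card := by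
      apply Finset.sum_congr rfl
      intro r hr
      rw [List.toFinset_card_of_nodup (hP.1 r hr).2.1]
    rw [h1, ← Finset.card_biUnion (fun r hr s hs hne => hdisj r hr s hs hne)]
    exact Finset.card_le_card (Finset.subset_univ _) |>.trans (le_of_eq (Finset.card_univ))
  calc ∑ r ∈ P, r.length ^ 2 ≤ ∑ r ∈ P, r.length * (∑ s ∈ P, s.length) := by
        apply Finset.sum_le_sum
        intro r hr
        rw [pow_two]
        exact Nat.mul_le_mul_left _ (Finset.single_le_sum (fun s _ => Nat.zero_le _) hr)
    _ = (∑ r ∈ P, r.length) * (∑ s ∈ P, s.length) := by rw [← Finset.sum_mul]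
    _ ≤ (Fintype.card V) * (Fintype.card V) := Nat.mul_le_mul hlen hlen
    _ = (Fintype.card V) ^ 2 := (pow_two _).symm

lemma getLast?_mem' {l : List V} {a : V} (h : l.getLast? = some a) : a ∈ l := by
  rw [eq_dropLast_append h]; simp

lemma getLast?_ne_nil {l : List V} {a : V} (h : l.getLast? = some a) : l ≠ [] := by
  rintro rfl; simp at h

lemma step (A : V → V → Prop) (hin : InSemicomplete A) {k : ℕ} {P : Finset (List V)}
    (hP : KOptimal A k P) {p q : List V} (hp : p ∈ P) (hq : q ∈ P) (hpq : p ≠ q)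
    {j : ℕ} (hjk : j < k) {u w : V}
    (hu : nthEnd p j = some u) (hw : nthEnd q j = some w) (hA : A u w) :
    ∃ P' : Finset (List V), KOptimal A k P' ∧
      (∑ r ∈ P, r.length ^ 2) < (∑ r ∈ P', r.length ^ 2) ∧
      (∀ i, i < j → StableEnds A P i → StableEnds A P' i) ∧
      (∀ Q : Finset (List V), IsPathPartition A Q → GR k j P' Q → GR k j P Q) := by
  obtain ⟨hPart, hOpt⟩ := hP
  obtain ⟨hpaths, hdisj, hcover⟩ := hPart
  have hpp := hpaths p hp
  have hqp := hpaths q hq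
  have ha : j < p.length := nthEnd_some_lt hu
  have hb : j < q.length := nthEnd_some_lt hw
  have hdpq : ∀ x ∈ p, x ∉ q := hdisj p hp q hq hpq
  have hpfu : (p.take (p.length - j)).getLast? = some u := hu
  have hqfw : (q.take (q.length - j)).getLast? = some w := hw
  set pf := p.take (p.length - j) with hpf_def
  set ps := p.drop (p.length - j) with hps_def
  set qf := q.take (q.length - j) with hqf_def
  set qs := q.drop (q.length - j) with hqs_def
  have hpsplit : pf ++ ps = p := List.take_append_drop _ _
  have hqsplit : qf ++ qs = q := List.take_append_drop _ _
  have hpf_len : pf.length = p.length - j := by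
    rw [hpf_def, List.length_take]; omega
  have hps_len : ps.length = j := by rw [hps_def, List.length_drop]; omega
  have hqf_len : qf.length = q.length - j := by
    rw [hqf_def, List.length_take]; omega
  have hqs_len : qs.length = j := by rw [hqs_def, List.length_drop]; omega
  have hpf_sub : ∀ x ∈ pf, x ∈ p := fun x hx => List.mem_of_mem_take hx
  have hps_sub : ∀ x ∈ ps, x ∈ p := fun x hx => List.mem_of_mem_drop hx
  have hqf_sub : ∀ x ∈ qf, x ∈ q := fun x hx => List.mem_of_mem_take hx
  have hqs_sub : ∀ x ∈ qs, x ∈ q := fun x hx => List.mem_of_mem_drop hx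
  have hu_pf : u ∈ pf := getLast?_mem' hpfu
  have hw_qf : w ∈ qf := getLast?_mem' hqfw
  have hpf_nd : pf.Nodup := hpp.2.1.sublist (List.take_sublist _ _)
  have hps_nd : ps.Nodup := hpp.2.1.sublist (List.drop_sublist _ _)
  have hqf_nd : qf.Nodup := hqp.2.1.sublist (List.take_sublist _ _)
  have hqs_nd : qs.Nodup := hqp.2.1.sublist (List.drop_sublist _ _)
  have hpfps : ∀ x ∈ pf, x ∉ ps := by
    have : (pf ++ ps).Nodup := hpsplit.symm ▸ hpp.2.1
    exact fun x hx => List.disjoint_of_nodup_append this hx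
  have hqfqs : ∀ x ∈ qf, x ∉ qs := by
    have : (qf ++ qs).Nodup := hqsplit.symm ▸ hqp.2.1
    exact fun x hx => List.disjoint_of_nodup_append this hx
  -- the merged path W
  have hX : IsPath A (pf ++ [w]) := by
    refine ⟨by simp, ?_, ?_⟩
    · exact List.nodup_append.2 ⟨hpf_nd, by simp, by
        intro x hx b hb hc
        rw [List.mem_singleton] at hb
        exact hdpq x (hpf_sub x hx) (by rw [hc, hb]; exact hqf_sub w hw_qf)⟩
    · refine List.isChain_append.2 ⟨hpp.2.2.take _, by simp, ?_⟩
      intro x hx y hy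
      rw [hpfu] at hx
      simp at hx hy
      rw [← hx, ← hy] at *
      exact hA
  have hY : IsPath A qf := ⟨getLast?_ne_nil hqfw, hqf_nd, hqp.2.2.take _⟩
  have hint : ∀ x, x ∈ pf ++ [w] → x ∈ qf → x = w := by
    intro x hx hxq
    rcases List.mem_append.1 hx with h | h
    · exact absurd (hqf_sub x hxq) (hdpq x (hpf_sub x h))
    · simpa using h
  obtain ⟨W, hWp, hWlast, hWfin⟩ := merge_paths A hin ((pf ++ [w]).length + qf.length)
    (pf ++ [w]) qf w le_rfl hX hY (by simp) hqfw hint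
  have hWmem : ∀ x, x ∈ W ↔ (x ∈ pf ∨ x = w ∨ x ∈ qf) := by
    intro x
    have : x ∈ W.toFinset ↔ x ∈ (pf ++ [w]).toFinset ∪ qf.toFinset := by rw [hWfin]
    simp only [List.mem_toFinset, Finset.mem_union, List.mem_append, List.mem_singleton] at this
    rw [this]; tauto
  -- the path R
  set R := W ++ qs with hR_def
  have hRmem : ∀ x, x ∈ R ↔ (x ∈ pf ∨ x ∈ q) := by
    intro x
    rw [hR_def, List.mem_append, hWmem]
    constructor
    · rintro ((h | rfl | h) | h)
      · exact Or.inl h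
      · exact Or.inr (hqf_sub _ hw_qf)
      · exact Or.inr (hqf_sub _ h)
      · exact Or.inr (hqs_sub _ h)
    · rintro (h | h)
      · exact Or.inl (Or.inl h)
      · rcases List.mem_append.1 (hqsplit ▸ h) with h' | h'
        · exact Or.inl (Or.inr (Or.inr h'))
        · exact Or.inr h'
  have hRp : IsPath A R := by
    refine ⟨by rw [hR_def]; simp [hWp.1], ?_, ?_⟩
    · refine List.nodup_append.2 ⟨hWp.2.1, hqs_nd, ?_⟩
      intro x hx y hxqs hxy
      subst hxy
      rcases (hWmem x).1 hx with h | rfl | h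
      · exact hdpq x (hpf_sub x h) (hqs_sub _ hxqs)
      · exact hqfqs _ hw_qf hxqs
      · exact hqfqs _ h hxqs
    · refine List.isChain_append.2 ⟨hWp.2.2, hqp.2.2.drop _, ?_⟩
      intro x hx y hy
      rw [hWlast] at hx
      have hxw : w = x := by simpa using hx
      subst hxw
      have hch : (qf ++ qs).Chain' A := hqsplit.symm ▸ hqp.2.2
      exact (List.isChain_append.1 hch).2.2 w hqfw y hy
  have hXqf_inter : (pf ++ [w]).toFinset ∩ qf.toFinset = {w} := by
    ext z
    simp only [Finset.mem_inter, Finset.mem_singleton, List.mem_toFinset]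
    constructor
    · rintro ⟨h1, h2⟩; exact hint z h1 h2
    · rintro rfl; exact ⟨by simp, hw_qf⟩
  have hWlen : W.length = (p.length - j) + (q.length - j) := by
    have h1 : W.toFinset.card = W.length := List.toFinset_card_of_nodup hWp.2.1
    have h2 := Finset.card_union_add_card_inter (pf ++ [w]).toFinset qf.toFinset
    rw [hXqf_inter] at h2
    have h3 : (pf ++ [w]).toFinset.card = pf.length + 1 :=
      (List.toFinset_card_of_nodup hX.2.1).trans (by simp)
    have h4 : qf.toFinset.card = qf.length := List.toFinset_card_of_nodup hqf_nd
    rw [h3, h4, hpf_len, hqf_len, Finset.card_singleton] at h2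
    rw [← h1, hWfin]
    omega
  have hRlen : R.length = (p.length - j) + (q.length - j) + j := by
    rw [hR_def, List.length_append, hWlen, hqs_len]
  -- the leftover path ps
  have hpsne : j ≠ 0 → ps ≠ [] := by
    intro h0 hc
    rw [hc] at hps_len
    simp at hps_len
    omega
  have hps_path : j ≠ 0 → IsPath A ps := fun h0 => ⟨hpsne h0, hps_nd, hpp.2.2.drop _⟩
  -- the new partition
  set E := (P.erase p).erase q with hE_def
  have hEmem : ∀ e, e ∈ E ↔ e ∈ P ∧ e ≠ p ∧ e ≠ q := by
    intro e
    rw [hE_def, Finset.mem_erase, Finset.mem_erase]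
    tauto
  have hEvert : ∀ e ∈ E, ∀ x ∈ e, x ∉ p ∧ x ∉ q := by
    intro e he x hx
    obtain ⟨heP, hep, heq⟩ := (hEmem e).1 he
    exact ⟨fun hc => hdisj e heP p hp hep x hx hc, fun hc => hdisj e heP q hq heq x hx hc⟩
  have hpsR : ∀ x ∈ ps, x ∉ R := by
    intro x hx hc
    rcases (hRmem x).1 hc with h | h
    · exact hpfps x h hx
    · exact hdpq x (hps_sub x hx) h
  have hRnotE : R ∉ E := by
    intro hc
    exact (hEvert R hc w ((hRmem w).2 (Or.inr (hqf_sub _ hw_qf)))).2 (hqf_sub _ hw_qf)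
  have hpsnotE : ps ≠ [] → ps ∉ E := by
    intro hne hc
    obtain ⟨x, hx⟩ := List.exists_mem_of_ne_nil ps hne
    exact (hEvert ps hc x hx).1 (hps_sub x hx)
  have hRneps : R ≠ ps := by
    intro hc
    rcases eq_or_ne ps [] with h | h
    · rw [h] at hc; exact hRp.1 hc
    · obtain ⟨x, hx⟩ := List.exists_mem_of_ne_nil ps h
      exact hpsR x hx (hc ▸ hx)
  set S : Finset (List V) := insert R (if j = 0 then (∅ : Finset (List V)) else {ps})
    with hS_def
  have hSmem : ∀ s, s ∈ S ↔ s = R ∨ (s = ps ∧ j ≠ 0) := by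
    intro s
    rw [hS_def]
    by_cases h0 : j = 0 <;> simp [h0]
  set P' : Finset (List V) := E ∪ S with hP'_def
  have hRP' : R ∈ P' := Finset.mem_union_right _ (Finset.mem_insert_self _ _)
  have hpsP' : j ≠ 0 → ps ∈ P' := fun h0 =>
    Finset.mem_union_right _ ((hSmem ps).2 (Or.inr ⟨rfl, h0⟩))
  have hP'mem : ∀ r, r ∈ P' ↔ (r ∈ E ∨ r = R ∨ (r = ps ∧ j ≠ 0)) := by
    intro r
    rw [hP'_def, Finset.mem_union, hSmem]
  have hdisjES : Disjoint E S := by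
    rw [Finset.disjoint_right]
    intro s hs hesE
    rcases (hSmem s).1 hs with rfl | ⟨rfl, h0⟩
    · exact hRnotE hesE
    · exact hpsnotE (hpsne h0) hesE
  -- vertex facts for partition check
  have hRvert : ∀ x ∈ R, x ∈ p ∨ x ∈ q := by
    intro x hx
    rcases (hRmem x).1 hx with h | h
    · exact Or.inl (hpf_sub x h)
    · exact Or.inr h
  have hP'part : IsPathPartition A P' := by
    refine ⟨?_, ?_, ?_⟩
    · intro r hr
      rcases (hP'mem r).1 hr with h | rfl | ⟨rfl, h0⟩
      · exact hpaths r ((hEmem r).1 h).1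
      · exact hRp
      · exact hps_path h0
    · intro r1 h1 r2 h2 hne x hx1 hx2
      rcases (hP'mem r1).1 h1 with hA1 | rfl | ⟨rfl, h01⟩ <;>
        rcases (hP'mem r2).1 h2 with hA2 | rfl | ⟨rfl, h02⟩
      · exact hdisj r1 ((hEmem r1).1 hA1).1 r2 ((hEmem r2).1 hA2).1 hne x hx1 hx2
      · rcases hRvert x hx2 with h | h
        · exact (hEvert r1 hA1 x hx1).1 h
        · exact (hEvert r1 hA1 x hx1).2 h
      · exact (hEvert r1 hA1 x hx1).1 (hps_sub x hx2)
      · rcases hRvert x hx1 with h | h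
        · exact (hEvert r2 hA2 x hx2).1 h
        · exact (hEvert r2 hA2 x hx2).2 h
      · exact hne rfl
      · exact hpsR x hx2 hx1
      · exact (hEvert r2 hA2 x hx2).1 (hps_sub x hx1)
      · exact hpsR x hx1 hx2
      · exact hne rfl
    · intro v
      obtain ⟨r, hr, hvr⟩ := hcover v
      by_cases hrp : r = p
      · subst hrp
        rcases List.mem_append.1 (hpsplit ▸ hvr) with h | h
        · exact ⟨R, hRP', (hRmem v).2 (Or.inl h)⟩
        · have h0 : j ≠ 0 := by
            intro hc
            rw [hps_def] at h
            rw [hc] at h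
            simp at h
          exact ⟨ps, hpsP' h0, h⟩
      · by_cases hrq : r = q
        · subst hrq
          exact ⟨R, hRP', (hRmem v).2 (Or.inr hvr)⟩
        · exact ⟨r, Finset.mem_union_left _ ((hEmem r).2 ⟨hr, hrp, hrq⟩), hvr⟩
  -- knorm computations
  have hq_in_erase : q ∈ P.erase p := Finset.mem_erase.2 ⟨fun hc => hpq hc.symm, hq⟩
  have hsumP : ∀ f : List V → ℕ, ∑ r ∈ P, f r = f p + (f q + ∑ r ∈ E, f r) := by
    intro f
    rw [hE_def, Finset.add_sum_erase _ f hq_in_erase, Finset.add_sum_erase _ f hp]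
  have hsumP' : ∀ f : List V → ℕ,
      ∑ r ∈ P', f r = (∑ r ∈ E, f r) + (f R + if j = 0 then 0 else f ps) := by
    intro f
    rw [hP'_def, Finset.sum_union hdisjES, hS_def]
    congr 1
    rw [Finset.sum_insert]
    · congr 1
      by_cases h0 : j = 0 <;> simp [h0]
    · by_cases h0 : j = 0 <;> simp [h0, hRneps]
  have hopt := hOpt P' hP'part
  rw [knorm, knorm, hsumP (fun r => min r.length k), hsumP' (fun r => min r.length k)] at hopt
  have hiteps : (if j = 0 then 0 else min ps.length k) = j := by
    by_cases h0 : j = 0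
    · simp [h0]
    · rw [if_neg h0, hps_len]; omega
  rw [hiteps, hRlen] at hopt
  have hak : p.length ≤ k := by omega
  have hbk : q.length ≤ k := by omega
  have hRk : R.length ≤ k := by rw [hRlen]; omega
  have hknorm_eq : knorm k P' = knorm k P := by
    rw [knorm, knorm, hsumP (fun r => min r.length k), hsumP' (fun r => min r.length k)]
    rw [hiteps, hRlen]
    omega
  refine ⟨P', ⟨hP'part, fun Q hQ => hknorm_eq ▸ hOpt Q hQ⟩, ?_, ?_, ?_⟩
  · -- measure increases
    rw [hsumP (fun r => r.length ^ 2), hsumP' (fun r => r.length ^ 2)]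
    have hite2 : (if j = 0 then 0 else ps.length ^ 2) = j ^ 2 := by
      by_cases h0 : j = 0
      · simp [h0]
      · rw [if_neg h0, hps_len]
    rw [hite2, hRlen]
    obtain ⟨x, hx⟩ : ∃ x, p.length = j + 1 + x := ⟨p.length - j - 1, by omega⟩
    obtain ⟨y, hy⟩ : ∃ y, q.length = j + 1 + y := ⟨q.length - j - 1, by omega⟩
    rw [hx, hy]
    have e1 : j + 1 + x - j = 1 + x := by omega
    have e2 : j + 1 + y - j = 1 + y := by omega
    rw [e1, e2]
    nlinarith [Nat.zero_le x, Nat.zero_le y, Nat.zero_le j]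
  · -- StableEnds transfer
    have hRqs : ∀ i, i < j → nthEnd R i = nthEnd qs i := by
      intro i hi
      rw [hR_def]
      exact nthEnd_append_right (by omega)
    have hqs_q : ∀ i, i < j → nthEnd qs i = nthEnd q i := by
      intro i hi
      rw [hqs_def]
      exact nthEnd_drop (by omega)
    have hps_p : ∀ i, i < j → nthEnd ps i = nthEnd p i := by
      intro i hi
      rw [hps_def]
      exact nthEnd_drop (by omega)
    intro i hij hst
    intro r1 h1 r2 h2 hne12 u1 u2 he1 he2
    rcases (hP'mem r1).1 h1 with hA1 | rfl | ⟨rfl, h01⟩ <;>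
      rcases (hP'mem r2).1 h2 with hA2 | rfl | ⟨rfl, h02⟩
    · exact hst r1 ((hEmem r1).1 hA1).1 r2 ((hEmem r2).1 hA2).1 hne12 u1 u2 he1 he2
    · refine hst r1 ((hEmem r1).1 hA1).1 q hq ((hEmem r1).1 hA1).2.2 u1 u2 he1 ?_
      rw [← hqs_q i hij, ← hRqs i hij]; exact he2
    · refine hst r1 ((hEmem r1).1 hA1).1 p hp ((hEmem r1).1 hA1).2.1 u1 u2 he1 ?_
      rw [← hps_p i hij]; exact he2
    · refine hst q hq r2 ((hEmem r2).1 hA2).1 (fun hc => ((hEmem r2).1 hA2).2.2 hc.symm)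
        u1 u2 ?_ he2
      rw [← hqs_q i hij, ← hRqs i hij]; exact he1
    · exact absurd rfl hne12
    · refine hst q hq p hp (fun hc => hpq hc.symm) u1 u2 ?_ ?_
      · rw [← hqs_q i hij, ← hRqs i hij]; exact he1
      · rw [← hps_p i hij]; exact he2
    · refine hst p hp r2 ((hEmem r2).1 hA2).1 (fun hc => ((hEmem r2).1 hA2).2.1 hc.symm)
        u1 u2 ?_ he2
      rw [← hps_p i hij]; exact he1
    · refine hst p hp q hq hpq u1 u2 ?_ ?_
      · rw [← hps_p i hij]; exact he1
      · rw [← hqs_q i hij, ← hRqs i hij]; exact he2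
    · exact absurd rfl hne12
  · -- GR transfer
    intro Q hQ hGR
    obtain ⟨ga, gb, gc, gd, ge, gf⟩ := hGR
    have hRqs : ∀ i, i < j → nthEnd R i = nthEnd qs i := by
      intro i hi
      rw [hR_def]
      exact nthEnd_append_right (by omega)
    have hqs_q : ∀ i, i < j → nthEnd qs i = nthEnd q i := by
      intro i hi
      rw [hqs_def]
      exact nthEnd_drop (by omega)
    have hpsk : ps.length ≤ k := by rw [hps_len]; omega
    have hpmem_split : ∀ v ∈ p, v ∈ pf ∨ v ∈ ps := fun v hv =>
      List.mem_append.1 (hpsplit ▸ hv)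
    have hpfR : ∀ v ∈ pf, v ∈ R := fun v hv => (hRmem v).2 (Or.inl hv)
    have hqR : ∀ v ∈ q, v ∈ R := fun v hv => (hRmem v).2 (Or.inr hv)
    have hdeep : ∀ v, (v ∈ p ∨ v ∈ qf) → ∀ d₀, nthEnd R d₀ = some v → j ≤ d₀ := by
      intro v hv d₀ hd₀
      by_contra hc
      push_neg at hc
      rw [hRqs d₀ hc] at hd₀
      have hvqs : v ∈ qs := nthEnd_mem hd₀
      rcases hv with h | h
      · exact hdpq v h (hqs_sub v hvqs)
      · exact hqfqs v h hvqs
    have hfrozen_p : ∀ d, d < j → nthEnd p d = nthEnd ps d := by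
      intro d hd
      conv_lhs => rw [← hpsplit]
      exact nthEnd_append_right (by omega)
    have hfrozen_q : ∀ d, d < j → nthEnd q d = nthEnd R d := by
      intro d hd
      conv_lhs => rw [← hqsplit]
      rw [nthEnd_append_right (by omega : d < qs.length)]
      exact (hRqs d hd).symm
    have hdeep_p : ∀ d, j ≤ d → nthEnd p d = nthEnd pf (d - j) := by
      intro d hd
      conv_lhs => rw [← hpsplit]
      rw [nthEnd_append_left (by omega), hps_len]
    have hdeep_q : ∀ d, j ≤ d → nthEnd q d = nthEnd qf (d - j) := by
      intro d hd
      conv_lhs => rw [← hqsplit]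
      rw [nthEnd_append_left (by omega), hqs_len]
    refine ⟨?_, ?_, ?_, ?_, ?_, ?_⟩
    · -- ga
      intro r hr hlen
      have hrP' := ga r hr hlen
      rcases (hP'mem r).1 hrP' with h | rfl | ⟨rfl, h0⟩
      · exact ((hEmem r).1 h).1
      · omega
      · rw [hps_len] at hlen; omega
    · -- gb
      intro p0 hp0 hlen
      have h1 : p0 ≠ p := fun hc => by subst hc; omega
      have h2 : p0 ≠ q := fun hc => by subst hc; omega
      exact gb p0 (Finset.mem_union_left _ ((hEmem p0).2 ⟨hp0, h1, h2⟩)) hlen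
    · -- gc
      intro p0 hp0 hlen v hv
      by_cases h1 : p0 = p
      · subst h1
        rcases hpmem_split v hv with h | h
        · exact gc R hRP' hRk v (hpfR v h)
        · have h0 : j ≠ 0 := by
            intro hc
            have : ps = [] := List.length_eq_zero_iff.1 (by omega)
            rw [this] at h; simp at h
          exact gc ps (hpsP' h0) hpsk v h
      · by_cases h2 : p0 = q
        · subst h2
          exact gc R hRP' hRk v (hqR v hv)
        · exact gc p0 (Finset.mem_union_left _ ((hEmem p0).2 ⟨hp0, h1, h2⟩)) hlen v hv
    · -- gd
      intro p0 hp0 hlen v hv v' hv' hne d hdv hdv'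
      have hcross : ∀ z z', z ∈ ps → z' ∈ pf → ∀ e, HasDepth Q z e → HasDepth Q z' e →
          False := by
        intro z z' hz hz' e hQz hQz'
        have h0 : j ≠ 0 := by
          intro hc
          have : ps = [] := List.length_eq_zero_iff.1 (by omega)
          rw [this] at hz; simp at hz
        obtain ⟨dz, hdz⟩ := exists_nthEnd hz
        have hdzlt : dz < j := by have := nthEnd_some_lt hdz; omega
        have hQz2 : HasDepth Q z dz := ge z dz hdzlt ⟨ps, hpsP' h0, hdz⟩
        have hedz : e = dz := HasDepth_unique hQ hQz hQz2
        obtain ⟨d₀, hd₀⟩ := exists_nthEnd (hpfR z' hz')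
        have hjd₀ : j ≤ d₀ := hdeep z' (Or.inl (hpf_sub z' hz')) d₀ hd₀
        have : j ≤ e := gf z' d₀ e hjd₀ ⟨R, hRP', hd₀⟩ hQz'
        omega
      by_cases h1 : p0 = p
      · subst h1
        rcases hpmem_split v hv with hvp | hvp <;> rcases hpmem_split v' hv' with hvp' | hvp'
        · exact gd R hRP' hRk v (hpfR v hvp) v' (hpfR v' hvp') hne d hdv hdv'
        · exact hcross v' v hvp' hvp d hdv' hdv
        · exact hcross v v' hvp hvp' d hdv hdv'
        · have h0 : j ≠ 0 := by
            intro hc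
            have : ps = [] := List.length_eq_zero_iff.1 (by omega)
            rw [this] at hvp; simp at hvp
          exact gd ps (hpsP' h0) hpsk v hvp v' hvp' hne d hdv hdv'
      · by_cases h2 : p0 = q
        · subst h2
          exact gd R hRP' hRk v (hqR v hv) v' (hqR v' hv') hne d hdv hdv'
        · exact gd p0 (Finset.mem_union_left _ ((hEmem p0).2 ⟨hp0, h1, h2⟩)) hlen
            v hv v' hv' hne d hdv hdv'
    · -- ge
      intro v d hd hPd
      obtain ⟨r, hr, hnth⟩ := hPd
      by_cases h1 : r = p
      · subst h1
        have h0 : j ≠ 0 := by omega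
        refine ge v d hd ⟨ps, hpsP' h0, ?_⟩
        rw [← hfrozen_p d hd]; exact hnth
      · by_cases h2 : r = q
        · subst h2
          refine ge v d hd ⟨R, hRP', ?_⟩
          rw [← hfrozen_q d hd]; exact hnth
        · exact ge v d hd ⟨r, Finset.mem_union_left _ ((hEmem r).2 ⟨hr, h1, h2⟩), hnth⟩
    · -- gf
      intro v d d' hjd hPd hQd'
      obtain ⟨r, hr, hnth⟩ := hPd
      by_cases h1 : r = p
      · subst h1
        have hvpf : v ∈ pf := by
          rw [hdeep_p d hjd] at hnth
          exact nthEnd_mem hnth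
        obtain ⟨d₀, hd₀⟩ := exists_nthEnd (hpfR v hvpf)
        exact gf v d₀ d' (hdeep v (Or.inl (hpf_sub v hvpf)) d₀ hd₀) ⟨R, hRP', hd₀⟩ hQd'
      · by_cases h2 : r = q
        · subst h2
          have hvqf : v ∈ qf := by
            rw [hdeep_q d hjd] at hnth
            exact nthEnd_mem hnth
          obtain ⟨d₀, hd₀⟩ := exists_nthEnd (hqR v (hqf_sub v hvqf))
          exact gf v d₀ d' (hdeep v (Or.inr hvqf) d₀ hd₀) ⟨R, hRP', hd₀⟩ hQd'
        · exact gf v d d' hjd ⟨r, Finset.mem_union_left _ ((hEmem r).2 ⟨hr, h1, h2⟩), hnth⟩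
            hQd'

lemma reduce (A : V → V → Prop) (hin : InSemicomplete A) (k : ℕ) :
    ∀ (N j : ℕ) (P : Finset (List V)), KOptimal A k P →
      (∀ i, i < j → StableEnds A P i) →
      (k - j) * ((Fintype.card V) ^ 2 + 1) +
        ((Fintype.card V) ^ 2 - ∑ r ∈ P, r.length ^ 2) < N →
      ∃ Pf : Finset (List V), KOptimal A k Pf ∧ (∀ i, i < k → StableEnds A Pf i) ∧
        GR k j P Pf := by
  intro N
  induction N with
  | zero => intro j P _ _ h; omega
  | succ N ih =>
    intro j P hP hred hN
    by_cases hjk : j < k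
    · by_cases hstable : StableEnds A P j
      · -- level j is stable; move to level j+1
        have hred' : ∀ i, i < j + 1 → StableEnds A P i := by
          intro i hi
          rcases Nat.lt_or_ge i j with h | h
          · exact hred i h
          · have : i = j := by omega
            subst this; exact hstable
        have hM : (k - j) * ((Fintype.card V) ^ 2 + 1) =
            (k - (j + 1)) * ((Fintype.card V) ^ 2 + 1) + ((Fintype.card V) ^ 2 + 1) := by
          have h1 : k - j = (k - (j + 1)) + 1 := by omega
          rw [h1]; ring
        obtain ⟨Pf, h1, h2, h3⟩ := ih (j + 1) P hP hred' (by rw [hM] at hN; omega)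
        refine ⟨Pf, h1, h2, ?_⟩
        obtain ⟨ga, gb, gc, gd, ge, gf⟩ := h3
        refine ⟨ga, gb, gc, gd, fun v d hd h => ge v d (by omega) h, ?_⟩
        intro v d d' hjd hPd hQd'
        rcases Nat.lt_or_ge d (j + 1) with h | h
        · have hdj : d = j := by omega
          subst hdj
          have hQd : HasDepth Pf v d := ge v d (by omega) hPd
          have : d' = d := HasDepth_unique h1.1 hQd' hQd
          omega
        · have := gf v d d' h hPd hQd'
          omega
      · -- find an adjacent pair at level j and merge
        unfold StableEnds at hstable
        push_neg at hstable
        obtain ⟨p, hp, q, hq, hpq, u, w, hu, hw, hDadj⟩ := hstable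
        have hkey : ∃ P' : Finset (List V), KOptimal A k P' ∧
            (∑ r ∈ P, r.length ^ 2) < (∑ r ∈ P', r.length ^ 2) ∧
            (∀ i, i < j → StableEnds A P i → StableEnds A P' i) ∧
            (∀ Q : Finset (List V), IsPathPartition A Q → GR k j P' Q → GR k j P Q) := by
          rcases hDadj with hA | hA
          · exact step A hin hP hp hq hpq hjk hu hw hA
          · obtain ⟨P', h1, h2, h3, h4⟩ := step A hin hP hq hp (Ne.symm hpq) hjk hw hu hA
            exact ⟨P', h1, h2, h3, h4⟩
        obtain ⟨P', hP'opt, hmeas, hstab, htrans⟩ := hkey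
        have hsq := sum_sq_le hP'opt.1
        obtain ⟨Pf, h1, h2, h3⟩ := ih j P' hP'opt (fun i hi => hstab i hi (hred i hi))
          (by omega)
        exact ⟨Pf, h1, h2, htrans Pf h1.1 h3⟩
    · -- j ≥ k : already reduced
      refine ⟨P, hP, fun i hik => hred i (by omega), ?_, ?_, ?_, ?_, ?_, ?_⟩
      · exact fun r hr _ => hr
      · exact fun r hr _ => hr
      · exact fun p hp hlen v hv => ⟨p, hp, hv, hlen⟩
      · intro p hp hlen v hv v' hv' hne d hd hd'
        obtain ⟨r, hr, hnth⟩ := hd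
        obtain ⟨s, hs, hnth'⟩ := hd'
        have h1 : r = p := mem_path_unique hP.1 hr hp (nthEnd_mem hnth) hv
        have h2 : s = p := mem_path_unique hP.1 hs hp (nthEnd_mem hnth') hv'
        subst h1; subst h2
        rw [hnth] at hnth'
        exact hne (Option.some_inj.1 hnth')
      · exact fun v d _ h => h
      · intro v d d' hjd hd hd'
        have := HasDepth_unique hP.1 hd hd'
        omega

/-- Berge's Conjecture for in-semicomplete digraphs. -/
theorem stmt4 (A : V → V → Prop) (hirr : Irreflexive A) (hin : InSemicomplete A)
    (k : ℕ) (hk : 0 < k) (P : Finset (List V)) (hP : KOptimal A k P) :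
    ∃ C : Fin k → Finset V, IsPartialKColoring A k C ∧ OrthoPC k C P := by
  obtain ⟨Pf, hPfopt, hPfstable, hGR⟩ := reduce A hin k
    ((k - 0) * ((Fintype.card V) ^ 2 + 1) +
      ((Fintype.card V) ^ 2 - ∑ r ∈ P, r.length ^ 2) + 1) 0 P hP
    (fun i hi => absurd hi (by omega)) (by omega)
  obtain ⟨ga, gb, gc, gd, ge, gf⟩ := hGR
  refine ⟨fun i => Finset.univ.filter (fun v => HasDepth Pf v i.val), ⟨?_, ?_⟩, ?_⟩
  · -- each class is stable
    intro i x hx y hy hne hadj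
    simp only [Finset.coe_filter, Finset.mem_univ, true_and, Set.mem_setOf_eq] at hx hy
    obtain ⟨r, hr, hnx⟩ := hx
    obtain ⟨s, hs, hny⟩ := hy
    by_cases hrs : r = s
    · subst hrs
      rw [hnx] at hny
      exact hne (Option.some_inj.1 hny)
    · exact hPfstable i.val i.2 r hr s hs hrs x y hnx hny hadj
  · -- classes are pairwise disjoint
    intro i j hij
    rw [Finset.disjoint_left]
    intro v hvi hvj
    simp only [Finset.mem_filter, Finset.mem_univ, true_and] at hvi hvj
    exact hij (Fin.ext (HasDepth_unique hPfopt.1 hvi hvj))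
  · -- orthogonality
    intro p hp
    by_cases hlen : p.length ≤ k
    · have hvd : ∀ v ∈ p, ∃ d, HasDepth Pf v d ∧ d < k := by
        intro v hv
        obtain ⟨r, hr, hvr, hrk⟩ := gc p hp hlen v hv
        obtain ⟨d, hd⟩ := exists_nthEnd hvr
        exact ⟨d, ⟨r, hr, hd⟩, lt_of_lt_of_le (nthEnd_some_lt hd) hrk⟩
      choose! g hg1 hg2 using hvd
      have hcard : p.toFinset.card ≤ (Finset.univ.filter
          (fun i : Fin k => ∃ x ∈ p, x ∈ Finset.univ.filter
            (fun v => HasDepth Pf v i.val))).card := by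
        apply Finset.card_le_card_of_injOn (fun v => (⟨g v % k, Nat.mod_lt _ hk⟩ : Fin k))
        · intro v hv
          simp only [Finset.mem_coe, List.mem_toFinset] at hv
          simp only [Finset.mem_coe, Finset.mem_filter, Finset.mem_univ, true_and]
          refine ⟨v, hv, ?_⟩
          rw [Nat.mod_eq_of_lt (hg2 v hv)]
          exact hg1 v hv
        · intro v hv v' hv' hEq
          rw [Finset.mem_coe, List.mem_toFinset] at hv hv'
          by_contra hne
          have hgg : g v = g v' := by
            have := congrArg Fin.val hEq
            simp only at this
            rw [Nat.mod_eq_of_lt (hg2 v hv), Nat.mod_eq_of_lt (hg2 v' hv')] at this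
            exact this
          exact gd p hp hlen v hv v' hv' hne (g v) (hg1 v hv) (hgg ▸ hg1 v' hv')
      have hnd : p.Nodup := (hP.1.1 p hp).2.1
      have hmin : min p.length k = p.length := min_eq_left hlen
      rw [hmin]
      calc p.length = p.toFinset.card := (List.toFinset_card_of_nodup hnd).symm
        _ ≤ _ := hcard
    · push_neg at hlen
      have hpPf : p ∈ Pf := gb p hp hlen
      have huniv : (Finset.univ.filter (fun i : Fin k => ∃ x ∈ p, x ∈ Finset.univ.filter
          (fun v => HasDepth Pf v i.val))) = Finset.univ := by
        apply Finset.eq_univ_iff_forall.2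
        intro i
        simp only [Finset.mem_filter, Finset.mem_univ, true_and]
        obtain ⟨x, hx⟩ := nthEnd_isSome (show i.val < p.length by
          have := i.2; omega)
        exact ⟨x, nthEnd_mem hx, ⟨p, hpPf, hx⟩⟩
      rw [huniv, Finset.card_univ, Fintype.card_fin]
      omega
end DigraphPaper
end
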